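/- Let f₁ : X₁ → X₁ and f₂ : X₂ → X₂ be functions on finite sets, θ : X₁ → X₁ a bijection commuting with f₁, and φ : X₁ → X₂ a map with φ ∘ f₁ = f₂ ∘ φ such that for every a ∈ X₂ the fiber φ⁻¹(a) is a single θ-orbit. Then a point α ∈ X₁ is periodic for f₁ if and only if φ(α) is periodic for f₂. -/

import Mathlib

/-- A point is periodic for `f` if some positive iterate of `f` fixes it. -/
def IsPerPt {X : Type*} (f : X → X) (x : X) : Prop := ∃ k > 0, f^[k] x = x

/-- Let `f₁ : X₁ → X₁`, `f₂ : X₂ → X₂` be functions on finite sets, `θ` a bijection of `X₁`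
commuting with `f₁`, and `φ` a map with `φ ∘ f₁ = f₂ ∘ φ` such that every fiber of `φ`
is a single `θ`-orbit. Then `α` is periodic for `f₁` iff `φ α` is periodic for `f₂`. -/
theorem covering_periodic_iff {X₁ X₂ : Type*} [Finite X₁] [Finite X₂]
    (f₁ : X₁ → X₁) (f₂ : X₂ → X₂) (θ : Equiv.Perm X₁) (φ : X₁ → X₂)
    (hθ : ∀ x, θ (f₁ x) = f₁ (θ x))
    (hφ : φ ∘ f₁ = f₂ ∘ φ)
    (hfib : ∀ a : X₂, ∃ α : X₁, φ ⁻¹' {a} = {x | ∃ i : ℤ, (θ ^ i) α = x})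
    (α : X₁) :
    IsPerPt f₁ α ↔ IsPerPt f₂ (φ α) := by
  have hsemi : ∀ (k : ℕ) (x : X₁), φ (f₁^[k] x) = f₂^[k] (φ x) := by
    intro k x
    have hsc : Function.Semiconj φ f₁ f₂ := fun y => congrFun hφ y
    exact (hsc.iterate_right k) x
  -- θ^n commutes with f₁ for natural n
  have hcn : ∀ (n : ℕ) (x : X₁), (θ ^ n) (f₁ x) = f₁ ((θ ^ n) x) := by
    intro n
    induction n with
    | zero => simp
    | succ n ih =>
      intro x
      simp only [pow_succ, Equiv.Perm.mul_apply]
      rw [hθ, ih]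
  -- θ^i commutes with f₁ for integer i
  have hc : ∀ (i : ℤ) (x : X₁), (θ ^ i) (f₁ x) = f₁ ((θ ^ i) x) := by
    intro i x
    cases i with
    | ofNat n => simpa using hcn n x
    | negSucc n =>
      have h := hcn (n + 1) ((θ ^ (n + 1))⁻¹ x)
      have : (θ ^ (n + 1))⁻¹ (f₁ x) = f₁ ((θ ^ (n + 1))⁻¹ x) := by
        apply (θ ^ (n + 1)).injective
        rw [Equiv.Perm.coe_inv, Equiv.apply_symm_apply, hcn, Equiv.apply_symm_apply]
      simpa [zpow_negSucc] using this
  constructor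
  · rintro ⟨k, hk, hfix⟩
    exact ⟨k, hk, by rw [← hsemi, hfix]⟩
  · rintro ⟨m, hm, hfix⟩
    obtain ⟨β, hβ⟩ := hfib (φ α)
    have hα : α ∈ φ ⁻¹' {φ α} := rfl
    rw [hβ] at hα
    obtain ⟨p, hp⟩ := hα
    have hα' : f₁^[m] α ∈ φ ⁻¹' {φ α} := by
      simp only [Set.mem_preimage, Set.mem_singleton_iff, hsemi, hfix]
    rw [hβ] at hα'
    obtain ⟨q, hq⟩ := hα'
    have hkey : (θ ^ (q - p)) α = f₁^[m] α := by
      rw [← hq, ← hp, ← Equiv.Perm.mul_apply, ← zpow_add, sub_add_cancel]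
    set i : ℤ := q - p
    -- f₁^[m * j] α = (θ^i)^j α
    have hiter : ∀ j : ℕ, f₁^[m * j] α = ((θ ^ i) ^ j) α := by
      intro j
      induction j with
      | zero => simp
      | succ j ih =>
        have hm' : m * (j + 1) = m * j + m := by ring
        have hcomm : ∀ x, (θ ^ i) (f₁^[m * j] x) = f₁^[m * j] ((θ ^ i) x) :=
          fun x => (Function.Semiconj.iterate_right (hc i) (m * j)) x
        rw [hm', Function.iterate_add_apply, ← hkey, ← hcomm, ih,
          ← Equiv.Perm.mul_apply, ← pow_succ']
    refine ⟨m * orderOf (θ ^ i), Nat.mul_pos hm (orderOf_pos _), ?_⟩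
    rw [hiter, pow_orderOf_eq_one]
    rfl
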